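/- The divergence operator maps the face element space W²_p onto the full polynomial space P_p(ℝ³). -/

import Mathlib

open MeasureTheory

/-- Partial derivative of a scalar function on ℝ³. -/
noncomputable def pd3 (f : (Fin 3 → ℝ) → ℝ) (i : Fin 3) (x : Fin 3 → ℝ) : ℝ :=
  fderiv ℝ f x (Pi.single i 1)

/-- Curl of a vector field on ℝ³. -/
noncomputable def curl3 (u : (Fin 3 → ℝ) → (Fin 3 → ℝ)) (x : Fin 3 → ℝ) : Fin 3 → ℝ :=
  ![pd3 (fun y => u y 2) 1 x - pd3 (fun y => u y 1) 2 x,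
    pd3 (fun y => u y 0) 2 x - pd3 (fun y => u y 2) 0 x,
    pd3 (fun y => u y 1) 0 x - pd3 (fun y => u y 0) 1 x]

/-- Divergence of a vector field on ℝ³. -/
noncomputable def div3 (u : (Fin 3 → ℝ) → (Fin 3 → ℝ)) (x : Fin 3 → ℝ) : ℝ :=
  ∑ i, pd3 (fun y => u y i) i x

/-- Gradient of a scalar field on ℝ³. -/
noncomputable def grad3 (f : (Fin 3 → ℝ) → ℝ) (x : Fin 3 → ℝ) : Fin 3 → ℝ :=
  fun i => pd3 f i x

/-- Cross product in ℝ³. -/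
def cross3 (a b : Fin 3 → ℝ) : Fin 3 → ℝ :=
  ![a 1 * b 2 - a 2 * b 1, a 2 * b 0 - a 0 * b 2, a 0 * b 1 - a 1 * b 0]

/-- Euclidean dot product in ℝ³. -/
def dot3 (a b : Fin 3 → ℝ) : ℝ := ∑ i, a i * b i

/-- `f` is (given by) a polynomial of total degree ≤ p. -/
def IsPoly3 (p : ℕ) (f : (Fin 3 → ℝ) → ℝ) : Prop :=
  ∃ q : MvPolynomial (Fin 3) ℝ, q.totalDegree ≤ p ∧ ∀ x, f x = MvPolynomial.eval x q

/-- Vector field whose components are polynomials of total degree ≤ p. -/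
def IsPolyVec3 (p : ℕ) (u : (Fin 3 → ℝ) → (Fin 3 → ℝ)) : Prop :=
  ∀ i, IsPoly3 p (fun x => u x i)

/-- First-family Nédélec space of degree p (as a set of vector fields). -/
def NedelecW1 (p : ℕ) : Set ((Fin 3 → ℝ) → (Fin 3 → ℝ)) :=
  {v | ∃ P Q, IsPolyVec3 p P ∧ IsPolyVec3 p Q ∧ ∀ x, v x = P x + cross3 (Q x) x}

/-- Face-element (second family) space of degree p. -/
def NedelecW2 (p : ℕ) : Set ((Fin 3 → ℝ) → (Fin 3 → ℝ)) :=
  {v | ∃ P q, IsPolyVec3 p P ∧ IsPoly3 p q ∧ ∀ x, v x = P x + q x • x}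

/-- Poincaré lifting with center a. -/
noncomputable def Rlift (a : Fin 3 → ℝ) (u : (Fin 3 → ℝ) → (Fin 3 → ℝ))
    (x : Fin 3 → ℝ) : Fin 3 → ℝ :=
  cross3 (∫ t in (0:ℝ)..1, t • u (a + t • (x - a))) (x - a)

/-- Degree-2 Poincaré lifting with center a. -/
noncomputable def Dlift (a : Fin 3 → ℝ) (u : (Fin 3 → ℝ) → ℝ)
    (x : Fin 3 → ℝ) : Fin 3 → ℝ :=
  (∫ t in (0:ℝ)..1, t ^ 2 * u (a + t • (x - a))) • (x - a)



open MvPolynomial in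
lemma hasFDerivAt_eval (q : MvPolynomial (Fin 3) ℝ) (x : Fin 3 → ℝ) :
    HasFDerivAt (fun y => eval y q)
      (∑ i, eval x (pderiv i q) • (ContinuousLinearMap.proj i : (Fin 3 → ℝ) →L[ℝ] ℝ)) x := by
  induction q using MvPolynomial.induction_on with
  | C a =>
      simp only [eval_C, pderiv_C, map_zero, zero_smul, Finset.sum_const_zero]
      exact hasFDerivAt_const a x
  | add r s hr hs =>
      simp only [eval_add, map_add, add_smul, Finset.sum_add_distrib]
      exact hr.add hs
  | mul_X r i hr =>
      have hx := hasFDerivAt_apply (𝕜 := ℝ) (F' := fun _ : Fin 3 => ℝ) i x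
      have h : HasFDerivAt (fun y : Fin 3 → ℝ => eval y r * y i) _ x := hr.mul hx
      have heq : (fun y : Fin 3 → ℝ => eval y r * y i) = fun y => eval y (r * X i) := by
        funext y; simp
      rw [heq] at h
      have hd : (∑ j : Fin 3, eval x (pderiv j (r * X i)) •
            (ContinuousLinearMap.proj j : (Fin 3 → ℝ) →L[ℝ] ℝ)) =
          eval x r • ContinuousLinearMap.proj i +
            x i • ∑ j : Fin 3, eval x (pderiv j r) •
              (ContinuousLinearMap.proj j : (Fin 3 → ℝ) →L[ℝ] ℝ) := by
        simp only [pderiv_mul, pderiv_X, map_add, map_mul, eval_X, Pi.single_apply,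
          apply_ite (eval x), map_one, map_zero, mul_one, mul_zero, mul_ite,
          add_smul, Finset.sum_add_distrib, ite_smul, zero_smul, Finset.sum_ite_eq,
          Finset.mem_univ, if_true, Finset.smul_sum, smul_smul]
        rw [add_comm]
        congr 1
        exact Finset.sum_congr rfl fun j _ => by rw [mul_comm]
      rw [hd]
      exact h

open MvPolynomial in
lemma pd3_eval (q : MvPolynomial (Fin 3) ℝ) (i : Fin 3) {f : (Fin 3 → ℝ) → ℝ}
    (hf : ∀ y, f y = eval y q) (x : Fin 3 → ℝ) :
    pd3 f i x = eval x (pderiv i q) := by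
  have hf' : f = fun y => eval y q := funext hf
  rw [hf']
  unfold pd3
  rw [(hasFDerivAt_eval q x).fderiv]
  rw [ContinuousLinearMap.sum_apply]
  simp only [ContinuousLinearMap.smul_apply, ContinuousLinearMap.proj_apply, smul_eq_mul,
    Pi.single_apply, mul_ite, mul_one, mul_zero, Finset.sum_ite_eq', Finset.mem_univ, if_true]

open MvPolynomial in
lemma X_mul_pderiv_monomial (i : Fin 3) (s : Fin 3 →₀ ℕ) (a : ℝ) :
    X i * pderiv i (monomial s a) = monomial s (a * s i) := by
  rw [pderiv_monomial]
  rcases Nat.eq_zero_or_pos (s i) with h | h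
  · simp [h]
  · rw [X, monomial_mul, one_mul]
    have hs : Finsupp.single i 1 + (s - Finsupp.single i 1) = s := by
      ext j
      rcases eq_or_ne j i with rfl | hne
      · simp only [Finsupp.add_apply, Finsupp.single_apply, Finsupp.tsub_apply,
          eq_self_iff_true, if_true]
        omega
      · simp [Finsupp.add_apply, Finsupp.single_apply, Finsupp.tsub_apply, hne.symm]
    rw [hs]

open MvPolynomial in
lemma totalDegree_pderiv_le (i : Fin 3) (q : MvPolynomial (Fin 3) ℝ) :
    (pderiv i q).totalDegree ≤ q.totalDegree := by
  conv_lhs => rw [q.as_sum]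
  rw [map_sum]
  refine (totalDegree_finset_sum _ _).trans (Finset.sup_le fun s hs => ?_)
  rw [pderiv_monomial]
  refine (totalDegree_monomial_le _ _).trans ?_
  refine le_trans ?_ (le_totalDegree hs)
  rw [Finsupp.sum_fintype _ _ (fun _ => rfl), Finsupp.sum_fintype _ _ (fun _ => rfl)]
  exact Finset.sum_le_sum fun j _ => by simp [Finsupp.tsub_apply]

open MvPolynomial in
lemma totalDegree_X_mul_pderiv_le (i : Fin 3) (q : MvPolynomial (Fin 3) ℝ) :
    (X i * pderiv i q).totalDegree ≤ q.totalDegree := by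
  conv_lhs => rw [q.as_sum]
  rw [map_sum, Finset.mul_sum]
  refine (totalDegree_finset_sum _ _).trans (Finset.sup_le fun s hs => ?_)
  rw [X_mul_pderiv_monomial]
  exact (totalDegree_monomial_le _ _).trans (le_totalDegree hs)

open MvPolynomial in
/-- The scaled polynomial solving the divergence equation. -/
noncomputable def solPoly (r : MvPolynomial (Fin 3) ℝ) : MvPolynomial (Fin 3) ℝ :=
  ∑ s ∈ r.support, monomial s (coeff s r / ((∑ j : Fin 3, s j : ℕ) + 3))

open MvPolynomial in
lemma totalDegree_solPoly_le (r : MvPolynomial (Fin 3) ℝ) :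
    (solPoly r).totalDegree ≤ r.totalDegree := by
  refine (totalDegree_finset_sum _ _).trans (Finset.sup_le fun s hs => ?_)
  exact (totalDegree_monomial_le _ _).trans (le_totalDegree hs)

open MvPolynomial in
lemma sum_pderiv_solPoly (r : MvPolynomial (Fin 3) ℝ) :
    ∑ i : Fin 3, pderiv i (solPoly r * X i) = r := by
  have step : ∀ i : Fin 3, pderiv i (solPoly r * X i) =
      X i * pderiv i (solPoly r) + solPoly r := by
    intro i
    rw [pderiv_mul, pderiv_X_self, mul_one, mul_comm]
  simp only [step]
  rw [Finset.sum_add_distrib]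
  have h1 : ∑ i : Fin 3, X i * pderiv i (solPoly r) =
      ∑ s ∈ r.support, monomial s (coeff s r / ((∑ j : Fin 3, s j : ℕ) + 3)
        * ((∑ j : Fin 3, s j : ℕ) : ℝ)) := by
    unfold solPoly
    simp only [map_sum, Finset.mul_sum, X_mul_pderiv_monomial]
    rw [Finset.sum_comm]
    refine Finset.sum_congr rfl fun s _ => ?_
    rw [← map_sum, ← Finset.mul_sum]
    congr 2
    push_cast
    rfl
  rw [h1, Finset.sum_const, Finset.card_univ, Fintype.card_fin]
  unfold solPoly
  rw [Finset.smul_sum, ← Finset.sum_add_distrib]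
  conv_rhs => rw [r.as_sum]
  refine Finset.sum_congr rfl fun s hs => ?_
  rw [smul_monomial, ← map_add]
  congr 1
  have hpos : (((∑ j : Fin 3, s j : ℕ) : ℝ)) + 3 ≠ 0 := by positivity
  rw [nsmul_eq_mul]
  field_simp
  ring

/-- `div(W²_p) = P_p(ℝ³)`. -/
theorem div_W2_eq_poly (p : ℕ) :
    {f | ∃ v ∈ NedelecW2 p, ∀ x, f x = div3 v x} = {f | IsPoly3 p f} := by
  ext f
  simp only [Set.mem_setOf_eq]
  constructor
  · rintro ⟨v, ⟨P, q, hP, hq, hv⟩, hf⟩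
    choose Pi hPdeg hPeval using hP
    obtain ⟨Q, hQdeg, hQeval⟩ := hq
    refine ⟨∑ i : Fin 3, MvPolynomial.pderiv i (Pi i + Q * MvPolynomial.X i), ?_, ?_⟩
    · refine (MvPolynomial.totalDegree_finset_sum _ _).trans (Finset.sup_le fun i _ => ?_)
      rw [map_add]
      refine (MvPolynomial.totalDegree_add _ _).trans (max_le ?_ ?_)
      · exact (totalDegree_pderiv_le i (Pi i)).trans (hPdeg i)
      · rw [MvPolynomial.pderiv_mul, MvPolynomial.pderiv_X_self, mul_one, mul_comm]
        refine (MvPolynomial.totalDegree_add _ _).trans (max_le ?_ ?_)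
        · exact (totalDegree_X_mul_pderiv_le i Q).trans hQdeg
        · exact hQdeg
    · intro x
      rw [hf x]
      unfold div3
      rw [map_sum]
      refine Finset.sum_congr rfl fun i _ => ?_
      refine pd3_eval _ i (fun y => ?_) x
      rw [hv y]
      simp [hPeval i y, hQeval y, mul_comm]
  · rintro ⟨r, hrdeg, hreval⟩
    refine ⟨fun x => MvPolynomial.eval x (solPoly r) • x, ⟨fun _ => 0,
      fun x => MvPolynomial.eval x (solPoly r), ?_, ?_, fun x => by simp⟩, ?_⟩
    · exact fun i => ⟨0, by simp, by simp⟩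
    · exact ⟨solPoly r, (totalDegree_solPoly_le r).trans hrdeg, fun _ => rfl⟩
    · intro x
      rw [hreval x]
      unfold div3
      conv_lhs => rw [← sum_pderiv_solPoly r, map_sum]
      refine (Finset.sum_congr rfl fun i _ => ?_).symm
      refine pd3_eval _ i (fun y => ?_) x
      simp [mul_comm]
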